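/- Let G be the dihedral group of order 8, W the 7-dimensional sum-zero subrepresentation of its complex left regular representation, and Sym²W its symmetric square. Let ρ : G → GL₂(ℂ) be the 2-dimensional irreducible representation determined by ρ(r) = [[i, 0], [0, −i]] and ρ(s) = [[0, 1], [1, 0]] (where i is the imaginary unit, r a generating rotation and s a reflection). Then the complex vector space of linear maps f : Sym²W → ℂ² satisfying f(g • x) = ρ(g)(f(x)) for all g ∈ G and x ∈ Sym²W has dimension 6. -/

import Mathlib

open scoped TensorProduct

set_option synthInstance.maxHeartbeats 1000000
set_option maxHeartbeats 1000000

/-- The left regular action of `g` on functions `DihedralGroup 4 → ℂ`: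
`(reg g f) x = f (g⁻¹ * x)`. -/
noncomputable def reg (g : DihedralGroup 4) :
    (DihedralGroup 4 → ℂ) →ₗ[ℂ] (DihedralGroup 4 → ℂ) :=
  LinearMap.funLeft ℂ ℂ (fun x => g⁻¹ * x)

/-- The subspace of sum-zero functions: the regular representation minus the
trivial representation; it is 7-dimensional. -/
noncomputable def W : Submodule ℂ (DihedralGroup 4 → ℂ) :=
  LinearMap.ker (∑ x : DihedralGroup 4, LinearMap.proj x :
    (DihedralGroup 4 → ℂ) →ₗ[ℂ] ℂ)

lemma reg_mem_W (g : DihedralGroup 4) {f : DihedralGroup 4 → ℂ} (hf : f ∈ W) :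
    reg g f ∈ W := by
  simp only [W, LinearMap.mem_ker, LinearMap.sum_apply, LinearMap.proj_apply] at hf ⊢
  calc ∑ x : DihedralGroup 4, reg g f x
      = ∑ x : DihedralGroup 4, f x :=
        Fintype.sum_equiv (Equiv.mulLeft g⁻¹) _ _ (fun x => rfl)
    _ = 0 := hf

/-- The action of `g` on `W`. -/
noncomputable def regW (g : DihedralGroup 4) : W →ₗ[ℂ] W :=
  (reg g).restrict (fun _ hf => reg_mem_W g hf)

noncomputable instance : AddCommGroup (↥W ⊗[ℂ] ↥W) := TensorProduct.addCommGroup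

/-- The diagonal action of `g` on `W ⊗ W`. -/
noncomputable def tenAct (g : DihedralGroup 4) : (↥W ⊗[ℂ] ↥W) →ₗ[ℂ] (↥W ⊗[ℂ] ↥W) :=
  TensorProduct.map (regW g) (regW g)

/-- The subspace of `W ⊗ W` spanned by the elements `x ⊗ y - y ⊗ x`. -/
noncomputable def symRel : Submodule ℂ (↥W ⊗[ℂ] ↥W) :=
  Submodule.span ℂ {z | ∃ x y : W, z = x ⊗ₜ[ℂ] y - y ⊗ₜ[ℂ] x}

/-- The symmetric square `Sym² W`: the quotient of `W ⊗ W` by the span of the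
elements `x ⊗ y - y ⊗ x`. -/
noncomputable abbrev Sym2W : Type := (↥W ⊗[ℂ] ↥W) ⧸ symRel

lemma symRel_le (g : DihedralGroup 4) : symRel ≤ symRel.comap (tenAct g) := by
  rw [symRel, Submodule.span_le]
  rintro z ⟨x, y, rfl⟩
  simp only [Submodule.mem_comap, map_sub, tenAct, TensorProduct.map_tmul]
  exact Submodule.subset_span ⟨regW g x, regW g y, rfl⟩

/-- The induced action of `g` on `Sym² W`. -/
noncomputable def symAct (g : DihedralGroup 4) : Sym2W →ₗ[ℂ] Sym2W :=
  Submodule.mapQ symRel symRel (tenAct g) (symRel_le g)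

/-- The 2-dimensional irreducible representation of `DihedralGroup 4`, with
`ρ(r) = [[i, 0], [0, -i]]` and `ρ(s) = [[0, 1], [1, 0]]`, so that
`ρ(r^i) = ρ(r)^i` and `ρ(s r^i) = ρ(s) ρ(r)^i`. -/
noncomputable def rho : DihedralGroup 4 → Matrix (Fin 2) (Fin 2) ℂ
  | .r i => !![Complex.I ^ i.val, 0; 0, (-Complex.I) ^ i.val]
  | .sr i => !![0, (-Complex.I) ^ i.val; Complex.I ^ i.val, 0]

/-- The space of `ρ`-equivariant linear maps `Sym² W → ℂ²`. -/
noncomputable def eqMapsRho : Submodule ℂ (Sym2W →ₗ[ℂ] (Fin 2 → ℂ)) where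
  carrier := {f | ∀ (g : DihedralGroup 4) (x : Sym2W),
    f (symAct g x) = (rho g).mulVec (f x)}
  add_mem' := by
    intro a b ha hb g x
    simp only [LinearMap.add_apply, ha g x, hb g x, Matrix.mulVec_add]
  zero_mem' := by
    intro g x
    simp [Matrix.mulVec_zero]
  smul_mem' := by
    intro c f hf g x
    simp only [LinearMap.smul_apply, hf g x, Matrix.mulVec_smul]



lemma reg_one : reg 1 = LinearMap.id := by
  ext f x
  simp [reg]

lemma reg_mul (g h : DihedralGroup 4) : reg (g * h) = reg g ∘ₗ reg h := by
  ext f x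
  simp [reg, mul_inv_rev, mul_assoc]

lemma regW_coe (g : DihedralGroup 4) (x : W) : ((regW g x : W) : DihedralGroup 4 → ℂ) = reg g x := rfl

lemma regW_one : regW 1 = LinearMap.id := by
  ext x y
  simp [regW, reg, LinearMap.restrict_apply]

lemma regW_mul (g h : DihedralGroup 4) : regW (g * h) = regW g ∘ₗ regW h := by
  ext x y
  simp [regW, reg, LinearMap.restrict_apply, mul_inv_rev, mul_assoc]

lemma tenAct_one : tenAct 1 = LinearMap.id := by
  rw [tenAct, regW_one, TensorProduct.map_id]

lemma tenAct_mul (g h : DihedralGroup 4) : tenAct (g * h) = tenAct g ∘ₗ tenAct h := by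
  rw [tenAct, regW_mul, TensorProduct.map_comp]
  rfl

lemma symAct_one : symAct 1 = LinearMap.id := by
  rw [symAct]
  have : tenAct 1 = LinearMap.id := tenAct_one
  rw [show Submodule.mapQ symRel symRel (tenAct 1) (symRel_le 1)
      = Submodule.mapQ symRel symRel LinearMap.id (this ▸ symRel_le 1) from by congr 1,
    Submodule.mapQ_id]

lemma symAct_mul (g h : DihedralGroup 4) : symAct (g * h) = symAct g ∘ₗ symAct h := by
  rw [symAct, symAct, symAct,
    show Submodule.mapQ symRel symRel (tenAct (g * h)) (symRel_le (g * h))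
      = Submodule.mapQ symRel symRel (tenAct g ∘ₗ tenAct h) ((tenAct_mul g h) ▸ symRel_le (g * h)) from by congr 1; exact tenAct_mul g h,
    Submodule.mapQ_comp]

lemma symAct_inv_cancel (g : DihedralGroup 4) (x : Sym2W) : symAct g (symAct g⁻¹ x) = x := by
  have := symAct_mul g g⁻¹
  rw [mul_inv_cancel, symAct_one] at this
  exact (LinearMap.ext_iff.mp this.symm x)
lemma pow_mod4 {u : ℂ} (h : u ^ 4 = 1) (n : ℕ) : u ^ (n % 4) = u ^ n := by
  conv_rhs => rw [← Nat.div_add_mod n 4, pow_add, pow_mul, h, one_pow, one_mul]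

lemma chi_add {u : ℂ} (h : u ^ 4 = 1) (a b : ZMod 4) :
    u ^ (a + b).val = u ^ a.val * u ^ b.val := by
  rw [ZMod.val_add, pow_mod4 h, pow_add]

lemma negI_pow_four : (-Complex.I) ^ 4 = 1 := by
  rw [show (4 : ℕ) = 2 * 2 from rfl, pow_mul, neg_pow, Complex.I_sq]
  norm_num

lemma I_val_add (a b : ZMod 4) :
    Complex.I ^ (a + b).val = Complex.I ^ a.val * Complex.I ^ b.val :=
  chi_add Complex.I_pow_four a b

lemma negI_val_add (a b : ZMod 4) :
    (-Complex.I) ^ (a + b).val = (-Complex.I) ^ a.val * (-Complex.I) ^ b.val :=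
  chi_add negI_pow_four a b

lemma I_mul_negI_val (a : ZMod 4) : Complex.I ^ a.val * (-Complex.I) ^ a.val = 1 := by
  rw [← mul_pow]
  simp [Complex.I_mul_I]

lemma negI_pow_ne_zero (a : ZMod 4) : (-Complex.I) ^ a.val ≠ 0 := by
  apply pow_ne_zero
  simp [Complex.I_ne_zero]

lemma negI_val_neg (i : ZMod 4) : (-Complex.I) ^ (-i).val = Complex.I ^ i.val := by
  apply mul_right_cancel₀ (negI_pow_ne_zero i)
  rw [← negI_val_add, neg_add_cancel, I_mul_negI_val]
  norm_num

lemma I_pow_ne_zero (a : ZMod 4) : Complex.I ^ a.val ≠ 0 :=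
  pow_ne_zero _ Complex.I_ne_zero

lemma I_val_neg (i : ZMod 4) : Complex.I ^ (-i).val = (-Complex.I) ^ i.val := by
  apply mul_right_cancel₀ (I_pow_ne_zero i)
  rw [← I_val_add, neg_add_cancel]
  rw [mul_comm ((-Complex.I) ^ i.val) _, I_mul_negI_val]
  norm_num

lemma rho_mul (g h : DihedralGroup 4) : rho (g * h) = rho g * rho h := by
  rcases g with i | i <;> rcases h with j | j <;>
    · ext a b
      fin_cases a <;> fin_cases b <;>
        · simp [rho, Matrix.mul_apply, Fin.sum_univ_two, sub_eq_add_neg,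
            I_val_add, negI_val_add, I_val_neg, negI_val_neg]
          try ring_nf
lemma rho_one : rho 1 = 1 := by
  show rho (.r 0) = 1
  simp [rho, Matrix.one_fin_two]

/-- The action of `g` on the Hom-space `Sym2W →ₗ ℂ²`. -/
noncomputable def sig (g : DihedralGroup 4) :
    (Sym2W →ₗ[ℂ] (Fin 2 → ℂ)) →ₗ[ℂ] (Sym2W →ₗ[ℂ] (Fin 2 → ℂ)) where
  toFun f := Matrix.toLin' (rho g) ∘ₗ f ∘ₗ symAct g⁻¹
  map_add' a b := by ext x; simp [Matrix.mulVec_add]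
  map_smul' c a := by ext x; simp [Matrix.mulVec_smul]

lemma sig_apply (g : DihedralGroup 4) (f : Sym2W →ₗ[ℂ] (Fin 2 → ℂ)) :
    sig g f = Matrix.toLin' (rho g) ∘ₗ f ∘ₗ symAct g⁻¹ := rfl

lemma sig_mul (g h : DihedralGroup 4) : sig (g * h) = sig g ∘ₗ sig h := by
  ext f x
  simp only [sig_apply, LinearMap.comp_apply, mul_inv_rev, Matrix.toLin'_apply]
  rw [show symAct (h⁻¹ * g⁻¹) = symAct h⁻¹ ∘ₗ symAct g⁻¹ from symAct_mul h⁻¹ g⁻¹,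
    rho_mul]
  simp [Matrix.mulVec_mulVec]

lemma mem_eqMapsRho_iff (f : Sym2W →ₗ[ℂ] (Fin 2 → ℂ)) :
    f ∈ eqMapsRho ↔ ∀ g : DihedralGroup 4, sig g f = f := by
  constructor
  · intro hf g
    refine LinearMap.ext fun x => ?_
    simp only [sig_apply, LinearMap.comp_apply, Matrix.toLin'_apply]
    rw [← hf g (symAct g⁻¹ x), symAct_inv_cancel]
  · intro hf g x
    calc f (symAct g x) = (sig g f) (symAct g x) := by rw [hf g]
    _ = (rho g).mulVec (f (symAct g⁻¹ (symAct g x))) := by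
        simp [sig_apply, Matrix.toLin'_apply]
    _ = (rho g).mulVec (f x) := by
        rw [show symAct g⁻¹ (symAct g x) = x from by
          have := symAct_inv_cancel g⁻¹ (x := x); rwa [inv_inv] at this]

/-- The averaging projector onto `eqMapsRho`. -/
noncomputable def P : (Sym2W →ₗ[ℂ] (Fin 2 → ℂ)) →ₗ[ℂ] (Sym2W →ₗ[ℂ] (Fin 2 → ℂ)) :=
  (8 : ℂ)⁻¹ • ∑ g : DihedralGroup 4, sig g

lemma card_dihedral : (Finset.univ : Finset (DihedralGroup 4)).card = 8 := by decide

lemma P_isProj : LinearMap.IsProj eqMapsRho P := by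
  constructor
  · intro f
    rw [mem_eqMapsRho_iff]
    intro h
    simp only [P, LinearMap.smul_apply, LinearMap.sum_apply, map_smul, map_sum]
    congr 1
    calc ∑ g : DihedralGroup 4, sig h ((sig g) f)
        = ∑ g : DihedralGroup 4, sig (h * g) f :=
          Finset.sum_congr rfl (fun g _ => by rw [sig_mul]; rfl)
      _ = ∑ g : DihedralGroup 4, sig g f :=
          Fintype.sum_equiv (Equiv.mulLeft h) _ _ (fun g => rfl)
  · intro f hf
    rw [mem_eqMapsRho_iff] at hf
    simp only [P, LinearMap.smul_apply, LinearMap.sum_apply]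
    rw [Finset.sum_congr rfl (fun g _ => hf g), Finset.sum_const, card_dihedral,
      ← Nat.cast_smul_eq_nsmul ℂ, smul_smul]
    norm_num
open LinearMap in
/-- Trace of the restriction of `F` to the range of a projection equals the
trace of `F ∘ π`. -/
lemma trace_restrict_eq_trace_comp {M : Type*} [AddCommGroup M] [Module ℂ M]
    [Module.Finite ℂ M] {q : Submodule ℂ M} {π F : M →ₗ[ℂ] M}
    (hπ : LinearMap.IsProj q π) (hF : ∀ x ∈ q, F x ∈ q) :
    trace ℂ q (F.restrict hF) = trace ℂ M (F ∘ₗ π) := by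
  let p' : M →ₗ[ℂ] q := π.codRestrict q hπ.map_mem
  have h1 : F ∘ₗ π = q.subtype ∘ₗ ((F.restrict hF) ∘ₗ p') := by
    ext x
    rfl
  rw [h1, trace_comp_comm']
  have h2 : ((F.restrict hF) ∘ₗ p') ∘ₗ q.subtype = F.restrict hF := by
    ext x
    have : p' (q.subtype x) = x := Subtype.ext (hπ.map_id x.1 x.2)
    simp only [LinearMap.comp_apply, this]
  rw [h2]

open LinearMap in
lemma trace_map_comp_comm {V : Type*} [AddCommGroup V] [Module ℂ V]
    [Module.Finite ℂ V] (A B : V →ₗ[ℂ] V) :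
    trace ℂ (V ⊗[ℂ] V) (TensorProduct.map A B ∘ₗ (TensorProduct.comm ℂ V V).toLinearMap)
      = trace ℂ V (A ∘ₗ B) := by
  classical
  let b := Module.Free.chooseBasis ℂ V
  rw [trace_eq_matrix_trace ℂ (b.tensorProduct b), trace_eq_matrix_trace ℂ b,
    LinearMap.toMatrix_comp b b b]
  simp only [Matrix.trace, Matrix.diag, Matrix.mul_apply, Fintype.sum_prod_type]
  apply Finset.sum_congr rfl
  intro i _
  apply Finset.sum_congr rfl
  intro j _
  rw [LinearMap.toMatrix_apply, LinearMap.toMatrix_apply, LinearMap.toMatrix_apply]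
  simp only [Module.Basis.tensorProduct_apply, LinearMap.comp_apply, LinearEquiv.coe_coe,
    TensorProduct.comm_tmul, TensorProduct.map_tmul,
    Module.Basis.tensorProduct_repr_tmul_apply]
  simp [mul_comm]
/-- The flip on `W ⊗ W`. -/
noncomputable def tau : (↥W ⊗[ℂ] ↥W) →ₗ[ℂ] (↥W ⊗[ℂ] ↥W) :=
  (TensorProduct.comm ℂ ↥W ↥W).toLinearMap

lemma tau_tmul (x y : W) : tau (x ⊗ₜ[ℂ] y) = y ⊗ₜ[ℂ] x := rfl

lemma tau_tau (z : ↥W ⊗[ℂ] ↥W) : tau (tau z) = z := by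
  induction z using TensorProduct.induction_on with
  | zero => simp
  | tmul x y => rfl
  | add a b ha hb => simp [map_add, ha, hb]

/-- The symmetrizer projection on `W ⊗ W`. -/
noncomputable def piS : (↥W ⊗[ℂ] ↥W) →ₗ[ℂ] (↥W ⊗[ℂ] ↥W) :=
  (2 : ℂ)⁻¹ • (LinearMap.id + tau)

lemma piS_apply (z : ↥W ⊗[ℂ] ↥W) : piS z = (2 : ℂ)⁻¹ • (z + tau z) := by
  simp [piS]

lemma tau_piS (z : ↥W ⊗[ℂ] ↥W) : tau (piS z) = piS z := by
  rw [piS_apply, map_smul, map_add, tau_tau, add_comm (tau z) z]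

lemma piS_piS (z : ↥W ⊗[ℂ] ↥W) : piS (piS z) = piS z := by
  conv_lhs => rw [piS_apply, tau_piS, ← two_smul ℂ (piS z), smul_smul]
  norm_num

/-- The symmetric part of `W ⊗ W`. -/
noncomputable def symPart : Submodule ℂ (↥W ⊗[ℂ] ↥W) := LinearMap.range piS

lemma piS_isProj : LinearMap.IsProj symPart piS := by
  constructor
  · intro x
    exact LinearMap.mem_range_self piS x
  · rintro x ⟨y, rfl⟩
    exact piS_piS y

lemma sub_tau_mem_symRel (z : ↥W ⊗[ℂ] ↥W) : z - tau z ∈ symRel := by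
  induction z using TensorProduct.induction_on with
  | zero => simp
  | tmul x y => exact Submodule.subset_span ⟨x, y, by rw [tau_tmul]⟩
  | add a b ha hb =>
    have : a + b - tau (a + b) = (a - tau a) + (b - tau b) := by
      rw [map_add]; abel
    rw [this]
    exact add_mem ha hb

lemma ker_piS : LinearMap.ker piS = symRel := by
  apply le_antisymm
  · intro z hz
    rw [LinearMap.mem_ker, piS_apply] at hz
    have h2 : z + tau z = 0 := by
      have := smul_eq_zero.mp hz
      rcases this with h | h
      · exact absurd h (by norm_num)
      · exact h
    have hz2 : z = (2 : ℂ)⁻¹ • (z - tau z) := by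
      have : tau z = -z := by linear_combination (norm := module) h2
      rw [this, sub_neg_eq_add, ← two_smul ℂ z, smul_smul]
      norm_num
    rw [hz2]
    exact Submodule.smul_mem _ _ (sub_tau_mem_symRel z)
  · rw [symRel, Submodule.span_le]
    rintro z ⟨x, y, rfl⟩
    simp only [SetLike.mem_coe, LinearMap.mem_ker, map_sub, piS_apply]
    rw [tau_tmul, tau_tmul, add_comm (y ⊗ₜ[ℂ] x) (x ⊗ₜ[ℂ] y), sub_self]

lemma isCompl_symRel_symPart : IsCompl symRel symPart := by
  have h := LinearMap.isCompl_of_proj (p := symPart)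
    (f := piS.codRestrict symPart piS_isProj.map_mem)
    (fun x => Subtype.ext (piS_isProj.map_id x.1 x.2))
  rw [LinearMap.ker_codRestrict, ker_piS] at h
  exact h.symm

lemma tenAct_comm_tau (g : DihedralGroup 4) : tenAct g ∘ₗ tau = tau ∘ₗ tenAct g := by
  apply TensorProduct.ext'
  intro x y
  simp [tau, tenAct]

lemma tenAct_comm_piS (g : DihedralGroup 4) (z : ↥W ⊗[ℂ] ↥W) :
    tenAct g (piS z) = piS (tenAct g z) := by
  rw [piS_apply, piS_apply, map_smul, map_add]
  congr 2
  exact LinearMap.congr_fun (tenAct_comm_tau g) z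

lemma tenAct_mem_symPart (g : DihedralGroup 4) : ∀ x ∈ symPart, tenAct g x ∈ symPart := by
  rintro x ⟨y, rfl⟩
  exact ⟨tenAct g y, (tenAct_comm_piS g y).symm⟩

lemma trace_symAct (g : DihedralGroup 4) :
    LinearMap.trace ℂ Sym2W (symAct g) =
      (2 : ℂ)⁻¹ * (LinearMap.trace ℂ W (regW g) * LinearMap.trace ℂ W (regW g)
        + LinearMap.trace ℂ W (regW g ∘ₗ regW g)) := by
  classical
  let e := Submodule.quotientEquivOfIsCompl symRel symPart isCompl_symRel_symPart
  have hconj : e.conj (symAct g) = (tenAct g).restrict (tenAct_mem_symPart g) := by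
    apply LinearMap.ext
    intro x
    apply Subtype.ext
    show (e ((symAct g) (e.symm x)) : ↥W ⊗[ℂ] ↥W) = tenAct g (x : ↥W ⊗[ℂ] ↥W)
    rw [Submodule.quotientEquivOfIsCompl_symm_apply, symAct, Submodule.mapQ_apply]
    have : (Submodule.Quotient.mk (tenAct g (x : ↥W ⊗[ℂ] ↥W)) : Sym2W)
        = Submodule.Quotient.mk ((⟨tenAct g (x : ↥W ⊗[ℂ] ↥W),
            tenAct_mem_symPart g _ x.2⟩ : symPart) : ↥W ⊗[ℂ] ↥W) := rfl
    rw [this, Submodule.quotientEquivOfIsCompl_apply_mk_coe]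
  have h1 : LinearMap.trace ℂ Sym2W (symAct g)
      = LinearMap.trace ℂ symPart ((tenAct g).restrict (tenAct_mem_symPart g)) := by
    rw [← hconj, LinearMap.trace_conj']
  rw [h1, trace_restrict_eq_trace_comp piS_isProj (tenAct_mem_symPart g)]
  have h2 : tenAct g ∘ₗ piS = (2 : ℂ)⁻¹ • (tenAct g + tenAct g ∘ₗ tau) := by
    apply LinearMap.ext
    intro z
    simp only [LinearMap.comp_apply, LinearMap.smul_apply, LinearMap.add_apply]
    rw [piS_apply, map_smul, map_add]
  rw [h2, map_smul, map_add]
  have h3 : LinearMap.trace ℂ _ (tenAct g)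
      = LinearMap.trace ℂ W (regW g) * LinearMap.trace ℂ W (regW g) := by
    rw [tenAct, LinearMap.trace_tensorProduct']
  have h4 : LinearMap.trace ℂ _ (tenAct g ∘ₗ tau)
      = LinearMap.trace ℂ W (regW g ∘ₗ regW g) :=
    trace_map_comp_comm (regW g) (regW g)
  rw [h3, h4]
  simp [smul_eq_mul]
/-- The averaging operator on functions on the group. -/
noncomputable def avg : (DihedralGroup 4 → ℂ) →ₗ[ℂ] (DihedralGroup 4 → ℂ) :=
  (8 : ℂ)⁻¹ • (LinearMap.pi fun _ : DihedralGroup 4 =>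
    (∑ x : DihedralGroup 4, LinearMap.proj x :
      (DihedralGroup 4 → ℂ) →ₗ[ℂ] ℂ))

lemma avg_apply (f : DihedralGroup 4 → ℂ) (y : DihedralGroup 4) :
    avg f y = (8 : ℂ)⁻¹ * ∑ x : DihedralGroup 4, f x := by
  simp [avg, LinearMap.pi_apply]

/-- Projection onto `W` along the constants. -/
noncomputable def piW : (DihedralGroup 4 → ℂ) →ₗ[ℂ] (DihedralGroup 4 → ℂ) :=
  LinearMap.id - avg

lemma piW_isProj : LinearMap.IsProj W piW := by
  constructor
  · intro f
    simp only [W, LinearMap.mem_ker, LinearMap.sum_apply, LinearMap.proj_apply]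
    have : ∀ y, piW f y = f y - (8 : ℂ)⁻¹ * ∑ x : DihedralGroup 4, f x := by
      intro y
      simp [piW, avg_apply]
    rw [Finset.sum_congr rfl (fun y _ => this y), Finset.sum_sub_distrib,
      Finset.sum_const, card_dihedral, nsmul_eq_mul]
    push_cast
    ring
  · intro f hf
    simp only [W, LinearMap.mem_ker, LinearMap.sum_apply, LinearMap.proj_apply] at hf
    funext y
    simp [piW, avg_apply, hf]

lemma reg_comp_avg (g : DihedralGroup 4) : reg g ∘ₗ avg = avg := by
  apply LinearMap.ext
  intro f
  funext y
  show avg f (g⁻¹ * y) = avg f y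
  rw [avg_apply, avg_apply]

lemma trace_avg : LinearMap.trace ℂ _ avg = 1 := by
  classical
  rw [LinearMap.trace_eq_matrix_trace ℂ (Pi.basisFun ℂ (DihedralGroup 4))]
  simp only [Matrix.trace, Matrix.diag, LinearMap.toMatrix_apply, Pi.basisFun_repr,
    Pi.basisFun_apply, avg_apply]
  have h : ∀ x : DihedralGroup 4,
      (8 : ℂ)⁻¹ * ∑ y : DihedralGroup 4, Pi.single x (1:ℂ) y = (8:ℂ)⁻¹ := by
    intro x
    rw [Finset.sum_pi_single']
    simp
  rw [Finset.sum_congr rfl (fun x _ => h x), Finset.sum_const, card_dihedral]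
  norm_num

lemma trace_reg (g : DihedralGroup 4) :
    LinearMap.trace ℂ _ (reg g)
      = ∑ x : DihedralGroup 4, (if g⁻¹ * x = x then (1 : ℂ) else 0) := by
  classical
  rw [LinearMap.trace_eq_matrix_trace ℂ (Pi.basisFun ℂ (DihedralGroup 4))]
  simp only [Matrix.trace, Matrix.diag, LinearMap.toMatrix_apply, Pi.basisFun_repr,
    Pi.basisFun_apply]
  apply Finset.sum_congr rfl
  intro x _
  show reg g (Pi.single x 1) x = _
  simp [reg, Pi.single_apply]

lemma trace_regW (g : DihedralGroup 4) :
    LinearMap.trace ℂ W (regW g)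
      = (∑ x : DihedralGroup 4, (if g⁻¹ * x = x then (1 : ℂ) else 0)) - 1 := by
  have h0 : regW g = (reg g).restrict (fun x hx => reg_mem_W g hx) := rfl
  rw [h0, trace_restrict_eq_trace_comp piW_isProj (fun x hx => reg_mem_W g hx)]
  have : reg g ∘ₗ piW = reg g - avg := by
    rw [piW, LinearMap.comp_sub, LinearMap.comp_id, reg_comp_avg]
  rw [this, map_sub, trace_avg, trace_reg]

lemma trace_regW_one : LinearMap.trace ℂ W (regW 1) = 7 := by
  rw [trace_regW]
  norm_num
  rw [show Fintype.card (DihedralGroup 4) = 8 from by decide]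
  norm_num

lemma trace_regW_r2 : LinearMap.trace ℂ W (regW (.r 2)) = -1 := by
  rw [trace_regW]
  have h : ∀ x : DihedralGroup 4, ¬((DihedralGroup.r 2 : DihedralGroup 4)⁻¹ * x = x) := by
    decide
  rw [Finset.sum_congr rfl (fun x _ => if_neg (h x))]
  simp
lemma trace_toLin' (A : Matrix (Fin 2) (Fin 2) ℂ) :
    LinearMap.trace ℂ (Fin 2 → ℂ) (Matrix.toLin' A) = Matrix.trace A := by
  rw [LinearMap.trace_eq_matrix_trace ℂ (Pi.basisFun ℂ (Fin 2)),
    LinearMap.toMatrix_eq_toMatrix', LinearMap.toMatrix'_toLin']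

lemma trace_sig (g : DihedralGroup 4) :
    LinearMap.trace ℂ _ (sig g)
      = Matrix.trace (rho g) * LinearMap.trace ℂ Sym2W (symAct g⁻¹) := by
  classical
  let e := dualTensorHomEquiv ℂ Sym2W (Fin 2 → ℂ)
  have he : (e : Module.Dual ℂ Sym2W ⊗[ℂ] (Fin 2 → ℂ) →ₗ[ℂ] (Sym2W →ₗ[ℂ] (Fin 2 → ℂ)))
      = dualTensorHom ℂ Sym2W (Fin 2 → ℂ) := rfl
  set F := TensorProduct.map (Module.Dual.transpose (R := ℂ) (symAct g⁻¹))
    (Matrix.toLin' (rho g)) with hF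
  have hcomp : (sig g) ∘ₗ (e : _ →ₗ[ℂ] _) = (e : _ →ₗ[ℂ] _) ∘ₗ F := by
    rw [he]
    apply TensorProduct.ext'
    intro φ w
    apply LinearMap.ext
    intro x
    simp only [LinearMap.comp_apply, dualTensorHom_apply, hF, TensorProduct.map_tmul,
      sig_apply, Module.Dual.transpose_apply, map_smul, Matrix.toLin'_apply]
  have hconj : e.conj F = sig g := by
    apply LinearMap.ext
    intro f
    rw [LinearEquiv.conj_apply]
    have := LinearMap.congr_fun hcomp (e.symm f)
    simp only [LinearMap.comp_apply, LinearEquiv.coe_coe] at this ⊢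
    rw [← this, LinearEquiv.apply_symm_apply]
  rw [← hconj, LinearMap.trace_conj', hF, LinearMap.trace_tensorProduct',
    LinearMap.trace_transpose', trace_toLin', mul_comm]

lemma trace_rho_r0 : Matrix.trace (rho (.r 0)) = 2 := by
  simp [rho, Matrix.trace_fin_two_of, show ((0 : ZMod 4)).val = 0 from rfl]
  try norm_num

lemma trace_rho_r1 : Matrix.trace (rho (.r 1)) = 0 := by
  simp [rho, Matrix.trace_fin_two_of, show ((1 : ZMod 4)).val = 1 from rfl]

lemma trace_rho_r2 : Matrix.trace (rho (.r 2)) = -2 := by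
  simp [rho, Matrix.trace_fin_two_of, show ((2 : ZMod 4)).val = 2 from rfl, neg_sq,
    Complex.I_sq]
  try norm_num

lemma trace_rho_r3 : Matrix.trace (rho (.r 3)) = 0 := by
  simp [rho, Matrix.trace_fin_two_of, show ((3 : ZMod 4)).val = 3 from rfl, pow_succ,
    Complex.I_sq]
  try ring

lemma trace_rho_sr (i : ZMod 4) : Matrix.trace (rho (.sr i)) = 0 := by
  simp [rho, Matrix.trace_fin_two_of]

lemma trace_symAct_r0 : LinearMap.trace ℂ Sym2W (symAct (.r 0)) = 28 := by
  have h1 : (DihedralGroup.r 0 : DihedralGroup 4) = 1 := rfl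
  rw [trace_symAct, h1, trace_regW_one, ← regW_mul, mul_one, trace_regW_one]
  norm_num

lemma trace_symAct_r2 : LinearMap.trace ℂ Sym2W (symAct (.r 2)) = 4 := by
  rw [trace_symAct, trace_regW_r2, ← regW_mul,
    show (DihedralGroup.r 2 * DihedralGroup.r 2 : DihedralGroup 4) = 1 from by decide,
    trace_regW_one]
  norm_num

lemma trace_P : LinearMap.trace ℂ _ P = 6 := by
  rw [P, map_smul, map_sum]
  rw [show (Finset.univ : Finset (DihedralGroup 4))
      = {.r 0, .r 1, .r 2, .r 3, .sr 0, .sr 1, .sr 2, .sr 3} from by decide]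
  rw [Finset.sum_insert (by decide), Finset.sum_insert (by decide),
    Finset.sum_insert (by decide), Finset.sum_insert (by decide),
    Finset.sum_insert (by decide), Finset.sum_insert (by decide),
    Finset.sum_insert (by decide), Finset.sum_singleton]
  rw [trace_sig, trace_sig, trace_sig, trace_sig, trace_sig, trace_sig, trace_sig,
    trace_sig, trace_rho_r0, trace_rho_r1, trace_rho_r2, trace_rho_r3, trace_rho_sr,
    trace_rho_sr, trace_rho_sr, trace_rho_sr,
    show (DihedralGroup.r 0 : DihedralGroup 4)⁻¹ = .r 0 from by decide,
    show (DihedralGroup.r 2 : DihedralGroup 4)⁻¹ = .r 2 from by decide,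
    trace_symAct_r0, trace_symAct_r2]
  norm_num

lemma finrank_eqMapsRho_eq_six_aux : Module.finrank ℂ eqMapsRho = 6 := by
  haveI : Module.Free ℂ ↥eqMapsRho := Module.Free.of_divisionRing ℂ ↥eqMapsRho
  haveI : Module.Free ℂ ↥(LinearMap.ker P) := Module.Free.of_divisionRing ℂ ↥(LinearMap.ker P)
  have hP := P_isProj.trace
  rw [trace_P] at hP
  exact_mod_cast hP.symm

/-- The multiplicity of the 2-dimensional irreducible representation `ρ` in
`Sym² W` is 6: the space of `ρ`-equivariant maps `Sym² W → ℂ²` has dimension 6. -/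
theorem finrank_eqMapsRho_eq_six : Module.finrank ℂ eqMapsRho = 6 :=
  finrank_eqMapsRho_eq_six_aux
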